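/- arXiv:2106.07094 — 2 statements merged into one kernel-verified Lean document; each statement's English description precedes it below -/
import Mathlib

section
/- Let f : ℝ^d → ℝ be convex, L-smooth (differentiable with L-Lipschitz gradient, L > 0), and G-Lipschitz (‖∇f(w)‖ ≤ G for all w). Suppose there exists λ with 0 < λ ≤ L such that ‖∇f(w − η∇f(w)) − ∇f(w)‖ ≥ η λ ‖∇f(w)‖ for all w ∈ ℝ^d, where η = ρ/(2L) for some 0 < ρ < 1. Let w_0 ∈ ℝ^d, define gradient-descent iterates w_{τ+1} = w_τ − η ∇f(w_τ), and set ρ̂ := (3λ²/(8L²))·ρ (note 0 < ρ̂ < 1). Then for every positive integer E, ‖Σ_{τ=0}^{E−1} ∇f(w_τ)‖ ≤ ((1 − (1 − ρ̂)^E)/ρ̂) · G. -/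
open scoped RealInnerProductSpace

section aux

variable {d : ℕ}

private lemma aux_hasDerivAt (f : EuclideanSpace ℝ (Fin d) → ℝ) (hdiff : Differentiable ℝ f)
    (x v : EuclideanSpace ℝ (Fin d)) (t : ℝ) :
    HasDerivAt (fun s : ℝ => f (x + s • v)) ⟪gradient f (x + t • v), v⟫ t := by
  have h1 : HasFDerivAt f
      ((InnerProductSpace.toDual ℝ _) (gradient f (x + t • v))) (x + t • v) :=
    hasGradientAt_iff_hasFDerivAt.mp (hdiff (x + t • v)).hasGradientAt
  have h2 : HasDerivAt (fun s : ℝ => x + s • v) v t := by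
    simpa using ((hasDerivAt_id t).smul_const v).const_add x
  simpa [Function.comp_def, InnerProductSpace.toDual_apply_apply] using h1.comp_hasDerivAt t h2

private lemma aux_convex_lb (f : EuclideanSpace ℝ (Fin d) → ℝ)
    (hconv : ConvexOn ℝ Set.univ f) (hdiff : Differentiable ℝ f)
    (x z : EuclideanSpace ℝ (Fin d)) :
    f x + ⟪gradient f x, z - x⟫ ≤ f z := by
  set φ : ℝ → ℝ := fun t => f (x + t • (z - x)) with hφ
  have hφconv : ConvexOn ℝ Set.univ φ := by
    have := hconv.comp_affineMap (AffineMap.lineMap x z)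
    simp only [Set.preimage_univ] at this
    have heq : φ = f ∘ ⇑(AffineMap.lineMap x z) := by
      funext t
      simp [φ, Function.comp, AffineMap.lineMap_apply, vsub_eq_sub, vadd_eq_add, add_comm]
    rw [heq]; exact this
  have hder : HasDerivAt φ ⟪gradient f x, z - x⟫ 0 := by
    have := aux_hasDerivAt f hdiff x (z - x) 0
    simpa using this
  have hslope := hφconv.le_slope_of_hasDerivAt (Set.mem_univ 0) (Set.mem_univ 1)
    one_pos hder
  have h01 : φ 0 = f x := by simp [φ]
  have h11 : φ 1 = f z := by simp [φ]
  rw [slope_def_field, h01, h11] at hslope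
  rw [show ((1:ℝ) - 0) = 1 by norm_num, div_one] at hslope
  linarith

private lemma aux_descent (f : EuclideanSpace ℝ (Fin d) → ℝ) {L : ℝ} (hL : 0 < L)
    (hdiff : Differentiable ℝ f)
    (hlip : ∀ x y, ‖gradient f x - gradient f y‖ ≤ L * ‖x - y‖)
    (x y : EuclideanSpace ℝ (Fin d)) :
    f y ≤ f x + ⟪gradient f x, y - x⟫ + L / 2 * ‖y - x‖ ^ 2 := by
  set v := y - x with hv
  set ψ : ℝ → ℝ := fun t =>
    f (x + t • v) - t * ⟪gradient f x, v⟫ - L * t ^ 2 / 2 * ‖v‖ ^ 2 with hψ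
  have hder : ∀ t : ℝ, HasDerivAt ψ
      (⟪gradient f (x + t • v), v⟫ - ⟪gradient f x, v⟫ - L * t * ‖v‖ ^ 2) t := by
    intro t
    have h1 := aux_hasDerivAt f hdiff x v t
    have h2 : HasDerivAt (fun t : ℝ => t * ⟪gradient f x, v⟫) ⟪gradient f x, v⟫ t := by
      simpa using (hasDerivAt_id t).mul_const ⟪gradient f x, v⟫
    have h3 : HasDerivAt (fun t : ℝ => L * t ^ 2 / 2 * ‖v‖ ^ 2) (L * t * ‖v‖ ^ 2) t := by
      have : HasDerivAt (fun t : ℝ => t ^ 2) (2 * t) t := by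
        simpa using hasDerivAt_pow 2 t
      have := ((this.const_mul L).div_const 2).mul_const (‖v‖ ^ 2)
      exact this.congr_deriv (by ring)
    have := (h1.sub h2).sub h3
    exact this
  have hnonpos : ∀ t ∈ Set.Ioo (0:ℝ) 1, deriv ψ t ≤ 0 := by
    intro t ht
    rw [(hder t).deriv]
    have hin : ⟪gradient f (x + t • v) - gradient f x, v⟫ ≤ L * t * ‖v‖ ^ 2 := by
      calc ⟪gradient f (x + t • v) - gradient f x, v⟫
          ≤ ‖gradient f (x + t • v) - gradient f x‖ * ‖v‖ := real_inner_le_norm _ _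
        _ ≤ (L * ‖(x + t • v) - x‖) * ‖v‖ := by
            have := hlip (x + t • v) x
            exact mul_le_mul_of_nonneg_right this (norm_nonneg _)
        _ = L * t * ‖v‖ ^ 2 := by
            have : ‖(x + t • v) - x‖ = t * ‖v‖ := by
              simp [norm_smul, abs_of_pos ht.1]
            rw [this]; ring
    have := inner_sub_left (𝕜 := ℝ) (gradient f (x + t • v)) (gradient f x) v
    rw [this] at hin
    linarith
  have hanti : AntitoneOn ψ (Set.Icc 0 1) := by
    apply antitoneOn_of_deriv_nonpos (convex_Icc 0 1)
    · exact fun t _ => ((hder t).continuousAt).continuousWithinAt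
    · intro t ht
      rw [interior_Icc] at ht
      exact ((hder t).differentiableAt).differentiableWithinAt
    · intro t ht
      rw [interior_Icc] at ht
      exact hnonpos t ht
  have h10 := hanti (Set.left_mem_Icc.mpr zero_le_one) (Set.right_mem_Icc.mpr zero_le_one)
    zero_le_one
  have hψ0 : ψ 0 = f x := by simp [ψ]
  have hxy : x + v = y := by rw [hv]; abel
  have hψ1 : ψ 1 = f y - ⟪gradient f x, v⟫ - L / 2 * ‖v‖ ^ 2 := by
    simp only [hψ, one_smul, one_pow, mul_one, one_mul, hxy]
  rw [hψ0, hψ1] at h10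
  linarith

private lemma aux_lower (f : EuclideanSpace ℝ (Fin d) → ℝ) {L : ℝ} (hL : 0 < L)
    (hconv : ConvexOn ℝ Set.univ f) (hdiff : Differentiable ℝ f)
    (hlip : ∀ x y, ‖gradient f x - gradient f y‖ ≤ L * ‖x - y‖)
    (x y : EuclideanSpace ℝ (Fin d)) :
    f x + ⟪gradient f x, y - x⟫ + 1 / (2 * L) * ‖gradient f y - gradient f x‖ ^ 2 ≤ f y := by
  set g := gradient f y - gradient f x with hg
  set z := y - (1 / L) • g with hz
  have h1 := aux_convex_lb f hconv hdiff x z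
  have h2 := aux_descent f hL hdiff hlip y z
  have hzy : z - y = -((1 / L) • g) := by simp [z]
  have e1 : ⟪gradient f x, z - x⟫ = ⟪gradient f x, y - x⟫ - (1/L) * ⟪gradient f x, g⟫ := by
    have : z - x = (y - x) + (-((1/L) • g)) := by simp [z]; abel
    rw [this, inner_add_right, inner_neg_right, inner_smul_right]; ring
  have e2 : ⟪gradient f y, z - y⟫ = -((1/L) * ⟪gradient f y, g⟫) := by
    rw [hzy, inner_neg_right, inner_smul_right]
  have e3 : ‖z - y‖ ^ 2 = (1/L)^2 * ‖g‖^2 := by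
    rw [hzy, norm_neg, norm_smul, mul_pow]
    simp only [Real.norm_eq_abs]
    rw [abs_of_pos (by positivity : (0:ℝ) < 1/L)]
  have e4 : ⟪gradient f y, g⟫ - ⟪gradient f x, g⟫ = ‖g‖ ^ 2 := by
    rw [← inner_sub_left, ← hg, real_inner_self_eq_norm_sq]
  rw [e1] at h1
  rw [e2, e3] at h2
  have hL' : L ≠ 0 := ne_of_gt hL
  have : f x + ⟪gradient f x, y - x⟫ - (1/L) * ⟪gradient f x, g⟫ ≤
      f y - (1/L) * ⟪gradient f y, g⟫ + L / 2 * ((1/L)^2 * ‖g‖^2) := by linarith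
  have key : f x + ⟪gradient f x, y - x⟫ + (1/L) * ‖g‖^2 - 1/(2*L) * ‖g‖^2 ≤ f y := by
    have expand : (1/L) * ⟪gradient f y, g⟫ - (1/L) * ⟪gradient f x, g⟫ = (1/L) * ‖g‖^2 := by
      rw [← mul_sub, e4]
    have hhalf : L / 2 * ((1/L)^2 * ‖g‖^2) = 1/(2*L) * ‖g‖^2 := by
      field_simp
      try ring
    nlinarith [this, expand, hhalf]
  have : (1/L) * ‖g‖^2 - 1/(2*L) * ‖g‖^2 = 1/(2*L) * ‖g‖^2 := by
    field_simp; try ring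
  linarith

private lemma aux_coco (f : EuclideanSpace ℝ (Fin d) → ℝ) {L : ℝ} (hL : 0 < L)
    (hconv : ConvexOn ℝ Set.univ f) (hdiff : Differentiable ℝ f)
    (hlip : ∀ x y, ‖gradient f x - gradient f y‖ ≤ L * ‖x - y‖)
    (x y : EuclideanSpace ℝ (Fin d)) :
    1 / L * ‖gradient f x - gradient f y‖ ^ 2 ≤ ⟪gradient f x - gradient f y, x - y⟫ := by
  have h1 := aux_lower f hL hconv hdiff hlip x y
  have h2 := aux_lower f hL hconv hdiff hlip y x
  have e1 : ‖gradient f y - gradient f x‖ = ‖gradient f x - gradient f y‖ := norm_sub_rev _ _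
  have e2 : ⟪gradient f x - gradient f y, x - y⟫
      = - ⟪gradient f x, y - x⟫ - ⟪gradient f y, x - y⟫ := by
    rw [inner_sub_left]
    have : (x - y : EuclideanSpace ℝ (Fin d)) = -(y - x) := by abel
    rw [this, inner_neg_right]
    try ring
  rw [e1] at h1
  have h2L : 0 < 2 * L := by positivity
  have : 1 / L * ‖gradient f x - gradient f y‖ ^ 2
      = 1 / (2*L) * ‖gradient f x - gradient f y‖ ^ 2
        + 1 / (2*L) * ‖gradient f x - gradient f y‖ ^ 2 := by
    field_simp; try ring
  rw [this, e2]
  linarith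

end aux

set_option maxHeartbeats 1000000 in
private lemma aux_step (f : EuclideanSpace ℝ (Fin d) → ℝ) (L lam ρ η ρhat : ℝ)
    (hL : 0 < L)
    (hconv : ConvexOn ℝ Set.univ f) (hdiff : Differentiable ℝ f)
    (hlip : ∀ x y, ‖gradient f x - gradient f y‖ ≤ L * ‖x - y‖)
    (hlam0 : 0 < lam) (hlamL : lam ≤ L)
    (hlow : ∀ x, ‖gradient f (x - η • gradient f x) - gradient f x‖ ≥
      η * lam * ‖gradient f x‖)
    (hρ0 : 0 < ρ) (hρ1 : ρ < 1) (hη : η = ρ / (2 * L))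
    (hρhat : ρhat = (3 * lam ^ 2 / (8 * L ^ 2)) * ρ)
    (x : EuclideanSpace ℝ (Fin d)) :
    ‖gradient f (x - η • gradient f x)‖ ≤ (1 - ρhat) * ‖gradient f x‖ := by
  have hη0 : 0 < η := by rw [hη]; positivity
  set y := x - η • gradient f x with hy
  set g := gradient f y - gradient f x with hg
  -- cocoercivity consequence
  have hcoco := aux_coco f hL hconv hdiff hlip x y
  have hxy : x - y = η • gradient f x := by simp [hy]
  have hgx : gradient f x - gradient f y = -g := by simp [hg]
  have hinner : η * ⟪g, gradient f x⟫ ≤ -(1 / L * ‖g‖ ^ 2) := by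
    have : ⟪gradient f x - gradient f y, x - y⟫ = -(η * ⟪g, gradient f x⟫) := by
      rw [hgx, hxy, inner_neg_left, inner_smul_right]
    rw [this] at hcoco
    have : ‖gradient f x - gradient f y‖ = ‖g‖ := by rw [hgx, norm_neg]
    rw [this] at hcoco
    linarith
  -- expansion of the squared norm
  have hexp : ‖gradient f y‖ ^ 2 = ‖gradient f x‖ ^ 2 + 2 * ⟪gradient f x, g⟫ + ‖g‖ ^ 2 := by
    have : gradient f x + g = gradient f y := by rw [hg]; abel
    rw [← this, norm_add_sq_real]
  have hcomm : ⟪gradient f x, g⟫ = ⟪g, gradient f x⟫ := real_inner_comm _ _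
  -- lower bound on ‖g‖
  have hlow' : η * lam * ‖gradient f x‖ ≤ ‖g‖ := hlow x
  set N := ‖gradient f x‖ with hN
  set M := ‖gradient f y‖ with hM
  set K := ‖g‖ with hK
  have hN0 : 0 ≤ N := norm_nonneg _
  have hM0 : 0 ≤ M := norm_nonneg _
  have hK0 : 0 ≤ K := norm_nonneg _
  -- inner ≤ -(1/(ηL)) K²
  have hin2 : ⟪g, gradient f x⟫ ≤ -(1 / (η * L) * K ^ 2) := by
    have heq : -(1 / (η * L) * K ^ 2) = (-(1 / L * K ^ 2)) / η := by
      field_simp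
    rw [heq, le_div_iff₀ hη0]
    nlinarith [hinner]
  have hηL : η * L = ρ / 2 := by rw [hη]; field_simp
  have hc : 1 / (η * L) = 2 / ρ := by rw [hηL]; rw [one_div_div]
  rw [hc] at hin2
  have hKsq : (η * lam * N) ^ 2 ≤ K ^ 2 :=
    pow_le_pow_left₀ (mul_nonneg (mul_nonneg hη0.le hlam0.le) hN0) hlow' 2
  have hMsq : M ^ 2 ≤ (1 - 2 * ρhat) * N ^ 2 := by
    have h1 : M ^ 2 ≤ N ^ 2 + (1 - 2 * (2 / ρ)) * K ^ 2 := by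
      rw [hcomm] at hexp
      nlinarith [hexp, hin2]
    have hρle : 1 - 2 * (2 / ρ) ≤ -(3 / ρ) := by
      have e1 : 1 - 2 * (2 / ρ) = (ρ - 4) / ρ := by field_simp; norm_num
      have e2 : -(3 / ρ) = (-3) / ρ := by ring
      rw [e1, e2, div_le_div_iff₀ hρ0 hρ0]
      nlinarith
    have h3 : (1 - 2 * (2 / ρ)) * K ^ 2 ≤ -(3 / ρ) * K ^ 2 :=
      mul_le_mul_of_nonneg_right hρle (sq_nonneg K)
    have h30 : 0 < 3 / ρ := by positivity
    have h4 : -(3 / ρ) * K ^ 2 ≤ -(3 / ρ) * (η * lam * N) ^ 2 := by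
      have := mul_le_mul_of_nonneg_left hKsq h30.le
      linarith
    have h5 : (3 / ρ) * (η * lam * N) ^ 2 = 2 * ρhat * N ^ 2 := by
      rw [hη, hρhat]
      field_simp
      ring
    linarith [h1, h3, h4, h5]
  have hρhat1 : ρhat < 1 := by
    rw [hρhat]
    have hlamsq : lam ^ 2 ≤ L ^ 2 := by nlinarith
    have : 3 * lam ^ 2 / (8 * L ^ 2) ≤ 3 / 8 := by
      rw [div_le_div_iff₀ (by positivity) (by norm_num)]
      nlinarith
    nlinarith [hρ0, hρ1]
  have hfinal : M ^ 2 ≤ ((1 - ρhat) * N) ^ 2 := by nlinarith [hMsq, sq_nonneg (ρhat * N)]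
  have h1ρ : 0 ≤ (1 - ρhat) * N := by
    apply mul_nonneg _ hN0
    linarith
  calc M = Real.sqrt (M ^ 2) := (Real.sqrt_sq hM0).symm
    _ ≤ Real.sqrt (((1 - ρhat) * N) ^ 2) := Real.sqrt_le_sqrt hfinal
    _ = (1 - ρhat) * N := Real.sqrt_sq h1ρ

/-- Equation (mar12-1005): geometric-sum bound on the update norm under the
gradient lower-bound assumption, with `ρ̂ = (3λ²/(8L²))ρ`. -/
theorem stmt_8 {d : ℕ} (f : EuclideanSpace ℝ (Fin d) → ℝ) (L G lam ρ η ρhat : ℝ)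
    (hL : 0 < L)
    (hconv : ConvexOn ℝ Set.univ f)
    (hdiff : Differentiable ℝ f)
    (hlip : ∀ x y, ‖gradient f x - gradient f y‖ ≤ L * ‖x - y‖)
    (hG : ∀ x, ‖gradient f x‖ ≤ G)
    (hlam0 : 0 < lam) (hlamL : lam ≤ L)
    (hlow : ∀ x, ‖gradient f (x - η • gradient f x) - gradient f x‖ ≥
      η * lam * ‖gradient f x‖)
    (hρ0 : 0 < ρ) (hρ1 : ρ < 1) (hη : η = ρ / (2 * L))
    (hρhat : ρhat = (3 * lam ^ 2 / (8 * L ^ 2)) * ρ)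
    (w : ℕ → EuclideanSpace ℝ (Fin d))
    (hw : ∀ τ, w (τ + 1) = w τ - η • gradient f (w τ)) :
    ∀ E : ℕ, 0 < E →
      ‖∑ τ ∈ Finset.range E, gradient f (w τ)‖ ≤
        ((1 - (1 - ρhat) ^ E) / ρhat) * G := by
  intro E _
  have hρhat0 : 0 < ρhat := by rw [hρhat]; positivity
  have hρhat1 : ρhat < 1 := by
    have h1 : lam ^ 2 ≤ L ^ 2 := by nlinarith
    have h2 : 3 * lam ^ 2 / (8 * L ^ 2) ≤ 3 / 8 := by
      rw [div_le_div_iff₀ (by positivity) (by norm_num)]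
      nlinarith
    have h3 := mul_le_mul_of_nonneg_right h2 hρ0.le
    rw [hρhat]
    nlinarith
  have hcontr : ∀ τ : ℕ, ‖gradient f (w (τ + 1))‖ ≤ (1 - ρhat) * ‖gradient f (w τ)‖ := by
    intro τ
    rw [hw τ]
    exact aux_step f L lam ρ η ρhat hL hconv hdiff hlip hlam0 hlamL hlow hρ0 hρ1 hη hρhat (w τ)
  have hbound : ∀ τ : ℕ, ‖gradient f (w τ)‖ ≤ (1 - ρhat) ^ τ * G := by
    intro τ
    induction τ with
    | zero => simpa using hG (w 0)
    | succ τ ih =>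
      calc ‖gradient f (w (τ + 1))‖ ≤ (1 - ρhat) * ‖gradient f (w τ)‖ := hcontr τ
        _ ≤ (1 - ρhat) * ((1 - ρhat) ^ τ * G) :=
            mul_le_mul_of_nonneg_left ih (by linarith)
        _ = (1 - ρhat) ^ (τ + 1) * G := by ring
  calc ‖∑ τ ∈ Finset.range E, gradient f (w τ)‖
      ≤ ∑ τ ∈ Finset.range E, ‖gradient f (w τ)‖ := norm_sum_le _ _
    _ ≤ ∑ τ ∈ Finset.range E, (1 - ρhat) ^ τ * G :=
        Finset.sum_le_sum fun τ _ => hbound τ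
    _ = (∑ τ ∈ Finset.range E, (1 - ρhat) ^ τ) * G := by rw [← Finset.sum_mul]
    _ = ((1 - (1 - ρhat) ^ E) / ρhat) * G := by
        have hne : (1 - ρhat) ≠ 1 := by
          intro h
          have : ρhat = 0 := by linarith [sub_eq_iff_eq_add.mp h]
          exact hρhat0.ne' this
        rw [geom_sum_eq hne E]
        congr 1
        rw [show (1 - ρhat) - 1 = -ρhat by ring, div_neg, ← neg_div, neg_sub]
end

section
/- Let f : ℝ^d → ℝ be convex and L-smooth (differentiable with L-Lipschitz gradient, L > 0), bounded below with f* := inf f. Let w_0 ∈ ℝ^d and define gradient-descent iterates w_{τ+1} = w_τ − η ∇f(w_τ) with step size 0 < η ≤ 1/L. Let E be a positive integer and u := Σ_{τ=0}^{E−1} ∇f(w_τ), and assume u ≠ 0 and ‖u‖ ≤ C for some C > 0. Then for every w* ∈ ℝ^d, with Δ := f(w*) − f*, it holds that −2 η C ⟨u/‖u‖, w_0 − w*⟩ + η² C² ≤ −2 η E (C/‖u‖)·{(f(w_0) − f(w*))·(1 − 2η²L²E²) − 2η²L²E²·Δ} + η² C². -/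
open scoped RealInnerProductSpace

section aux

variable {F : Type*} [NormedAddCommGroup F] [InnerProductSpace ℝ F] [CompleteSpace F]

lemma line_hasDerivAt (f : F → ℝ) (hdiff : Differentiable ℝ f) (x v : F) (t : ℝ) :
    HasDerivAt (fun s : ℝ => f (x + s • v)) ⟪gradient f (x + t • v), v⟫ t := by
  have h1 : HasFDerivAt f (InnerProductSpace.toDual ℝ F (gradient f (x + t • v))) (x + t • v) :=
    hasGradientAt_iff_hasFDerivAt.1 (hdiff _).hasGradientAt
  have h2 : HasDerivAt (fun s : ℝ => x + s • v) v t := by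
    simpa using ((hasDerivAt_id t).smul_const v).const_add x
  have h3 := h1.comp_hasDerivAt t h2
  simp only [Function.comp_def, InnerProductSpace.toDual_apply_apply] at h3
  exact h3

lemma convex_grad_le (f : F → ℝ) (hconv : ConvexOn ℝ Set.univ f) (hdiff : Differentiable ℝ f)
    (x y : F) : f x + ⟪gradient f x, y - x⟫ ≤ f y := by
  have key : ∀ s : ℝ, (AffineMap.lineMap x y : ℝ →ᵃ[ℝ] F) s = x + s • (y - x) := by
    intro s
    rw [AffineMap.lineMap_apply_module]
    module
  have hφ : ConvexOn ℝ Set.univ (fun s : ℝ => f (x + s • (y - x))) := by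
    have h := hconv.comp_affineMap (AffineMap.lineMap x y : ℝ →ᵃ[ℝ] F)
    have hfun : (fun s : ℝ => f (x + s • (y - x)))
        = f ∘ (AffineMap.lineMap x y : ℝ →ᵃ[ℝ] F) := by
      funext s; simp [Function.comp, key]
    rw [hfun]
    simpa using h
  have hd : HasDerivAt (fun s : ℝ => f (x + s • (y - x))) ⟪gradient f x, y - x⟫ 0 := by
    have := line_hasDerivAt f hdiff x (y - x) 0
    simpa using this
  have hs := hφ.le_slope_of_hasDerivAt (Set.mem_univ (0:ℝ)) (Set.mem_univ (1:ℝ)) one_pos hd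
  have : slope (fun s : ℝ => f (x + s • (y - x))) 0 1
      = f (x + (1:ℝ) • (y - x)) - f (x + (0:ℝ) • (y - x)) := by
    simp [slope_def_field]
  rw [this] at hs
  simp only [one_smul, zero_smul, add_zero, add_sub_cancel] at hs
  linarith

lemma smooth_upper (f : F → ℝ) (L : ℝ) (hdiff : Differentiable ℝ f)
    (hlip : ∀ x y, ‖gradient f x - gradient f y‖ ≤ L * ‖x - y‖) (x y : F) :
    f y ≤ f x + ⟪gradient f x, y - x⟫ + L / 2 * ‖y - x‖ ^ 2 := by
  set v := y - x with hv
  set g : ℝ → ℝ := fun t => f (x + t • v) - t * ⟪gradient f x, v⟫ - L / 2 * t ^ 2 * ‖v‖ ^ 2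
    with hgdef
  have hgd : ∀ t : ℝ, HasDerivAt g
      (⟪gradient f (x + t • v), v⟫ - ⟪gradient f x, v⟫ - L * t * ‖v‖ ^ 2) t := by
    intro t
    have h1 := line_hasDerivAt f hdiff x v t
    have h2 : HasDerivAt (fun t : ℝ => t * ⟪gradient f x, v⟫) ⟪gradient f x, v⟫ t := by
      simpa using (hasDerivAt_id t).mul_const (⟪gradient f x, v⟫)
    have h3 : HasDerivAt (fun t : ℝ => L / 2 * t ^ 2 * ‖v‖ ^ 2) (L * t * ‖v‖ ^ 2) t := by
      have h := ((hasDerivAt_pow 2 t).const_mul (L / 2)).mul_const (‖v‖ ^ 2)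
      convert h using 1
      · rfl
      · rfl
      · exact (show L * t * ‖v‖ ^ 2 = L / 2 * (((2:ℕ):ℝ) * t ^ (2 - 1)) * ‖v‖ ^ 2 by
          simp only [Nat.cast_ofNat, Nat.reduceSub, pow_one]; ring)
    exact (h1.sub h2).sub h3
  have hanti : AntitoneOn g (Set.Icc (0:ℝ) 1) := by
    apply antitoneOn_of_deriv_nonpos (convex_Icc 0 1)
    · exact fun t _ => ((hgd t).continuousAt).continuousWithinAt
    · exact fun t _ => ((hgd t).differentiableAt).differentiableWithinAt
    · intro t ht
      rw [interior_Icc] at ht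
      rw [(hgd t).deriv]
      have h4 : ⟪gradient f (x + t • v) - gradient f x, v⟫
          ≤ ‖gradient f (x + t • v) - gradient f x‖ * ‖v‖ := real_inner_le_norm _ _
      have h5 : ‖gradient f (x + t • v) - gradient f x‖ ≤ L * (t * ‖v‖) := by
        have := hlip (x + t • v) x
        simpa [norm_smul, abs_of_pos ht.1] using this
      have h6 : ⟪gradient f (x + t • v) - gradient f x, v⟫
          = ⟪gradient f (x + t • v), v⟫ - ⟪gradient f x, v⟫ := inner_sub_left _ _ _
      nlinarith [norm_nonneg v, norm_nonneg (gradient f (x + t • v) - gradient f x)]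
  have h01 := hanti (Set.left_mem_Icc.2 zero_le_one) (Set.right_mem_Icc.2 zero_le_one) zero_le_one
  have hg0 : g 0 = f x := by simp [hgdef]
  have hg1 : g 1 = f y - ⟪gradient f x, v⟫ - L / 2 * ‖v‖ ^ 2 := by
    simp [hgdef, hv]
  rw [hg0, hg1] at h01
  linarith

end aux

set_option maxHeartbeats 1000000 in
/-- Case 2 (equation feb2-3) in the proof of Theorem E.1 (DP-NormFedAvg): bound
on the normalized-update term when the update norm is at most the scaling
factor `C`. -/
theorem stmt_12 {d : ℕ} (f : EuclideanSpace ℝ (Fin d) → ℝ) (L : ℝ) (hL : 0 < L)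
    (hconv : ConvexOn ℝ Set.univ f)
    (hdiff : Differentiable ℝ f)
    (hlip : ∀ x y, ‖gradient f x - gradient f y‖ ≤ L * ‖x - y‖)
    (fstar : ℝ) (hfstar : IsGLB (Set.range f) fstar)
    (η : ℝ) (hη0 : 0 < η) (hη : η ≤ 1 / L)
    (w : ℕ → EuclideanSpace ℝ (Fin d))
    (hw : ∀ τ, w (τ + 1) = w τ - η • gradient f (w τ))
    (E : ℕ) (hE : 0 < E)
    (u : EuclideanSpace ℝ (Fin d))
    (hu : u = ∑ τ ∈ Finset.range E, gradient f (w τ))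
    (hu0 : u ≠ 0)
    (C : ℝ) (hC0 : 0 < C) (hnorm : ‖u‖ ≤ C)
    (wstar : EuclideanSpace ℝ (Fin d))
    (Δ : ℝ) (hΔ : Δ = f wstar - fstar) :
    -2 * η * C * ⟪‖u‖⁻¹ • u, w 0 - wstar⟫ + η ^ 2 * C ^ 2 ≤
      -2 * η * (E : ℝ) * (C / ‖u‖)
          * ((f (w 0) - f wstar) * (1 - 2 * η ^ 2 * L ^ 2 * (E : ℝ) ^ 2)
              - 2 * η ^ 2 * L ^ 2 * (E : ℝ) ^ 2 * Δ)
        + η ^ 2 * C ^ 2 := by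
  have hfx : ∀ x, fstar ≤ f x := fun x => hfstar.1 (Set.mem_range_self x)
  have hLinv : L * L⁻¹ = 1 := mul_inv_cancel₀ hL.ne'
  have hηL : η * L ≤ 1 := (le_div_iff₀ hL).1 hη
  -- gradient norm squared bound
  have gradsq : ∀ x, ‖gradient f x‖ ^ 2 ≤ 2 * L * (f x - fstar) := by
    intro x
    have h := smooth_upper f L hdiff hlip x (x - L⁻¹ • gradient f x)
    have he : x - L⁻¹ • gradient f x - x = -(L⁻¹ • gradient f x) := by abel
    rw [he] at h
    have h1 : ⟪gradient f x, -(L⁻¹ • gradient f x)⟫ = -(L⁻¹ * ‖gradient f x‖ ^ 2) := by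
      rw [inner_neg_right, real_inner_smul_right, real_inner_self_eq_norm_sq]
    have h2 : ‖-(L⁻¹ • gradient f x)‖ ^ 2 = L⁻¹ ^ 2 * ‖gradient f x‖ ^ 2 := by
      rw [norm_neg, norm_smul, mul_pow, Real.norm_eq_abs, sq_abs]
    rw [h1, h2] at h
    have h3 := hfx (x - L⁻¹ • gradient f x)
    have key : L⁻¹ * ‖gradient f x‖ ^ 2 - L / 2 * (L⁻¹ ^ 2 * ‖gradient f x‖ ^ 2)
        = ‖gradient f x‖ ^ 2 / (2 * L) := by
      field_simp
      ring
    have h4 : ‖gradient f x‖ ^ 2 / (2 * L) ≤ f x - fstar := by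
      rw [← key]; linarith
    have h5 := (div_le_iff₀ (by positivity : (0:ℝ) < 2 * L)).1 h4
    nlinarith [h5]
  -- descent
  have descent : ∀ τ, f (w (τ + 1)) ≤ f (w τ) := by
    intro τ
    rw [hw τ]
    have h := smooth_upper f L hdiff hlip (w τ) (w τ - η • gradient f (w τ))
    have he : w τ - η • gradient f (w τ) - w τ = -(η • gradient f (w τ)) := by abel
    rw [he] at h
    have h1 : ⟪gradient f (w τ), -(η • gradient f (w τ))⟫
        = -(η * ‖gradient f (w τ)‖ ^ 2) := by
      rw [inner_neg_right, real_inner_smul_right, real_inner_self_eq_norm_sq]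
    have h2 : ‖-(η • gradient f (w τ))‖ ^ 2 = η ^ 2 * ‖gradient f (w τ)‖ ^ 2 := by
      rw [norm_neg, norm_smul, mul_pow, Real.norm_eq_abs, sq_abs]
    rw [h1, h2] at h
    nlinarith [sq_nonneg ‖gradient f (w τ)‖, hη0]
  have hf0 : ∀ τ, f (w τ) ≤ f (w 0) := by
    intro τ
    induction τ with
    | zero => exact le_refl _
    | succ n ih => exact (descent n).trans ih
  set G := Real.sqrt (2 * L * (f (w 0) - fstar)) with hGdef
  have hG0 : 0 ≤ G := Real.sqrt_nonneg _
  have hG2 : G ^ 2 = 2 * L * (f (w 0) - fstar) := by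
    rw [hGdef, Real.sq_sqrt]
    have := hfx (w 0); nlinarith
  have hgG : ∀ τ, ‖gradient f (w τ)‖ ≤ G := by
    intro τ
    have h1 : ‖gradient f (w τ)‖ ^ 2 ≤ 2 * L * (f (w 0) - fstar) := by
      have := gradsq (w τ); have := hf0 τ; nlinarith
    calc ‖gradient f (w τ)‖ = Real.sqrt (‖gradient f (w τ)‖ ^ 2) :=
          (Real.sqrt_sq (norm_nonneg _)).symm
      _ ≤ G := Real.sqrt_le_sqrt h1
  have hwsum : ∀ τ, w 0 - w τ = η • ∑ s ∈ Finset.range τ, gradient f (w s) := by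
    intro τ
    induction τ with
    | zero => simp
    | succ n ih =>
      rw [hw n, Finset.sum_range_succ, smul_add, ← ih]
      abel
  have hdist : ∀ τ, τ ≤ E → ‖w 0 - w τ‖ ≤ η * E * G := by
    intro τ hτ
    rw [hwsum τ, norm_smul, Real.norm_eq_abs, abs_of_pos hη0]
    have h1 : ‖∑ s ∈ Finset.range τ, gradient f (w s)‖
        ≤ ∑ s ∈ Finset.range τ, ‖gradient f (w s)‖ := norm_sum_le _ _
    have h2 : ∑ s ∈ Finset.range τ, ‖gradient f (w s)‖ ≤ (τ : ℝ) * G := by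
      calc ∑ s ∈ Finset.range τ, ‖gradient f (w s)‖ ≤ ∑ s ∈ Finset.range τ, G :=
            Finset.sum_le_sum fun s _ => hgG s
        _ = (τ : ℝ) * G := by rw [Finset.sum_const, Finset.card_range, nsmul_eq_mul]
    have h3 : (τ : ℝ) ≤ (E : ℝ) := Nat.cast_le.2 hτ
    have h4 : (τ : ℝ) * G ≤ (E : ℝ) * G := mul_le_mul_of_nonneg_right h3 hG0
    calc η * ‖∑ s ∈ Finset.range τ, gradient f (w s)‖ ≤ η * ((E : ℝ) * G) :=
          mul_le_mul_of_nonneg_left ((h1.trans h2).trans h4) hη0.le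
      _ = η * E * G := by ring
  have perterm : ∀ τ, τ < E →
      f (w 0) - f wstar - η ^ 2 * L ^ 2 * (E : ℝ) ^ 2 * (f (w 0) - fstar)
        ≤ ⟪gradient f (w τ), w 0 - wstar⟫ := by
    intro τ hτ
    have hA := convex_grad_le f hconv hdiff (w τ) wstar
    have hB := smooth_upper f L hdiff hlip (w τ) (w 0)
    have hsplit : ⟪gradient f (w τ), w 0 - wstar⟫
        = ⟪gradient f (w τ), w 0 - w τ⟫ - ⟪gradient f (w τ), wstar - w τ⟫ := by
      rw [← inner_sub_right]; congr 1; abel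
    have hd := hdist τ hτ.le
    have hd2 : ‖w 0 - w τ‖ ^ 2 ≤ (η * E * G) ^ 2 := pow_le_pow_left₀ (norm_nonneg _) hd 2
    have h7 : L / 2 * ‖w 0 - w τ‖ ^ 2 ≤ η ^ 2 * L ^ 2 * (E : ℝ) ^ 2 * (f (w 0) - fstar) := by
      have h8 : L / 2 * ‖w 0 - w τ‖ ^ 2 ≤ L / 2 * (η * E * G) ^ 2 :=
        mul_le_mul_of_nonneg_left hd2 (by positivity)
      have h9 : L / 2 * (η * (E : ℝ) * G) ^ 2
          = η ^ 2 * L ^ 2 * (E : ℝ) ^ 2 * (f (w 0) - fstar) := by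
        have h10 : (η * (E : ℝ) * G) ^ 2 = η ^ 2 * (E : ℝ) ^ 2 * G ^ 2 := by ring
        rw [h10, hG2]; ring
      linarith
    rw [hsplit]
    linarith [hA, hB, h7]
  -- sum over τ
  have hsum : (E : ℝ) * (f (w 0) - f wstar - η ^ 2 * L ^ 2 * (E : ℝ) ^ 2 * (f (w 0) - fstar))
      ≤ ⟪u, w 0 - wstar⟫ := by
    have h1 : ∑ τ ∈ Finset.range E,
        (f (w 0) - f wstar - η ^ 2 * L ^ 2 * (E : ℝ) ^ 2 * (f (w 0) - fstar))
        ≤ ∑ τ ∈ Finset.range E, ⟪gradient f (w τ), w 0 - wstar⟫ :=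
      Finset.sum_le_sum fun τ hτ => perterm τ (Finset.mem_range.1 hτ)
    rw [Finset.sum_const, Finset.card_range, nsmul_eq_mul] at h1
    rw [hu, sum_inner]
    exact h1
  have hun : (0:ℝ) < ‖u‖ := norm_pos_iff.2 hu0
  set A : ℝ := ⟪u, w 0 - wstar⟫ with hAdef
  have hinner : ⟪‖u‖⁻¹ • u, w 0 - wstar⟫ = ‖u‖⁻¹ * ⟪u, w 0 - wstar⟫ :=
    real_inner_smul_left _ _ _
  rw [hinner, div_eq_mul_inv]
  have hK : (E : ℝ) * ((f (w 0) - f wstar) * (1 - 2 * η ^ 2 * L ^ 2 * (E : ℝ) ^ 2)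
      - 2 * η ^ 2 * L ^ 2 * (E : ℝ) ^ 2 * Δ) ≤ ⟪u, w 0 - wstar⟫ := by
    rw [hΔ]
    have h9 : 0 ≤ η ^ 2 * L ^ 2 * (E : ℝ) ^ 3 * (f (w 0) - fstar) :=
      mul_nonneg (by positivity) (sub_nonneg.2 (hfx (w 0)))
    linarith [hsum, h9]
  have hpos : (0:ℝ) < 2 * η * (C * ‖u‖⁻¹) := by positivity
  linarith [mul_le_mul_of_nonneg_left hK hpos.le]
end
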